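/- Let M and M′ be T0-algebras and let f : M → M′ be an MT-morphism, i.e., a complete Boolean algebra homomorphism (preserving arbitrary suprema, arbitrary infima, and complements) such that f(□a) ≤ □′f(a) for all a ∈ M. Then f is a Raney morphism, i.e., f satisfies conditions (R1)–(R5). -/

import Mathlib

/-- An interior operator on a complete Boolean algebra (Kuratowski axioms). -/
structure MTInterior {M : Type*} [CompleteBooleanAlgebra M] (box : M → M) : Prop where
  map_top : box ⊤ = ⊤
  map_inf : ∀ a b : M, box (a ⊓ b) = box a ⊓ box b
  le_self : ∀ a : M, box a ≤ a
  le_box_box : ∀ a : M, box a ≤ box (box a)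

/-- An element is open if it is a fixpoint of the interior operator. -/
def MTOpen {M : Type*} [CompleteBooleanAlgebra M] (box : M → M) (a : M) : Prop :=
  box a = a

/-- An element is closed if its complement is open. -/
def MTClosed {M : Type*} [CompleteBooleanAlgebra M] (box : M → M) (a : M) : Prop :=
  MTOpen box aᶜ

/-- An element is saturated if it is an infimum of a set of open elements. -/
def MTSat {M : Type*} [CompleteBooleanAlgebra M] (box : M → M) (a : M) : Prop :=
  ∃ S : Set M, (∀ s ∈ S, MTOpen box s) ∧ a = sInf S

/-- An element is locally closed if it is the meet of an open and a closed element. -/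
def MTLocClosed {M : Type*} [CompleteBooleanAlgebra M] (box : M → M) (a : M) : Prop :=
  ∃ u c, MTOpen box u ∧ MTClosed box c ∧ a = u ⊓ c

/-- Membership in the Boolean subalgebra `𝓑𝓢M` generated by the saturated elements. -/
inductive MTBS {M : Type*} [CompleteBooleanAlgebra M] (box : M → M) : M → Prop
  | sat (a : M) : MTSat box a → MTBS box a
  | bot : MTBS box ⊥
  | top : MTBS box ⊤
  | inf (a b : M) : MTBS box a → MTBS box b → MTBS box (a ⊓ b)
  | sup (a b : M) : MTBS box a → MTBS box b → MTBS box (a ⊔ b)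
  | compl (a : M) : MTBS box a → MTBS box aᶜ

/-- An MT-algebra is a `T₀`-algebra if every element is a supremum of elements of the
form `s ⊓ c` with `s` saturated and `c` closed. -/
def MTT0 {M : Type*} [CompleteBooleanAlgebra M] (box : M → M) : Prop :=
  ∀ a : M, a = sSup {b | (∃ s c, MTSat box s ∧ MTClosed box c ∧ b = s ⊓ c) ∧ b ≤ a}

/-- A Raney morphism between MT-algebras. -/
structure MTRaneyHom {M M' : Type*} [CompleteBooleanAlgebra M] [CompleteBooleanAlgebra M']
    (box : M → M) (box' : M' → M') (f : M → M') : Prop where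
  sat_map : ∀ a : M, MTSat box a → MTSat box' (f a)
  sat_sup : ∀ a b : M, MTSat box a → MTSat box b → f (a ⊔ b) = f a ⊔ f b
  map_bot : f ⊥ = ⊥
  sat_sInf : ∀ S : Set M, (∀ s ∈ S, MTSat box s) → f (sInf S) = sInf (f '' S)
  open_map : ∀ a : M, MTOpen box a → MTOpen box' (f a)
  map_top : f ⊤ = ⊤
  open_sSup : ∀ S : Set M, (∀ s ∈ S, MTOpen box s) → f (sSup S) = sSup (f '' S)
  map_inf : ∀ a b : M, f (a ⊓ b) = f a ⊓ f b
  bs_sup : ∀ x y : M, MTBS box x → MTBS box y → f (x ⊔ y) = f x ⊔ f y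
  approx : ∀ a : M, f a = sSup (f '' {x | MTBS box x ∧ x ≤ a})

/-- every MT-morphism between `T₀`-algebras is a Raney morphism. -/
theorem stmt_15 {M M' : Type*} [CompleteBooleanAlgebra M] [CompleteBooleanAlgebra M']
    (box : M → M) (box' : M' → M') (hbox : MTInterior box) (hbox' : MTInterior box')
    (ht : MTT0 box) (ht' : MTT0 box')
    (f : M → M')
    (hsSup : ∀ S : Set M, f (sSup S) = sSup (f '' S))
    (hsInf : ∀ S : Set M, f (sInf S) = sInf (f '' S))
    (hcompl : ∀ a : M, f aᶜ = (f a)ᶜ)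
    (hMT : ∀ a : M, f (box a) ≤ box' (f a)) :
    MTRaneyHom box box' f := by
  have hsup : ∀ a b : M, f (a ⊔ b) = f a ⊔ f b := by
    intro a b
    have := hsSup {a, b}
    simpa [Set.image_insert_eq] using this
  have hinf : ∀ a b : M, f (a ⊓ b) = f a ⊓ f b := by
    intro a b
    have := hsInf {a, b}
    simpa [Set.image_insert_eq] using this
  have hbot : f ⊥ = ⊥ := by simpa using hsSup ∅
  have htop : f ⊤ = ⊤ := by simpa using hsInf ∅
  have hopen : ∀ a : M, MTOpen box a → MTOpen box' (f a) := by
    intro a ha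
    have h1 : f (box a) ≤ box' (f a) := hMT a
    rw [ha] at h1
    exact le_antisymm (hbox'.le_self _) h1
  refine ⟨?_, fun a b _ _ => hsup a b, hbot, fun S _ => hsInf S, hopen, htop,
    fun S _ => hsSup S, hinf, fun x y _ _ => hsup x y, ?_⟩
  · rintro a ⟨S, hS, rfl⟩
    exact ⟨f '' S, fun s ⟨x, hx, hfx⟩ => hfx ▸ hopen x (hS x hx), hsInf S⟩
  · intro a
    have key : a = sSup {x | MTBS box x ∧ x ≤ a} := by
      apply le_antisymm
      · calc a = sSup {b | (∃ s c, MTSat box s ∧ MTClosed box c ∧ b = s ⊓ c) ∧ b ≤ a} := ht a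
          _ ≤ sSup {x | MTBS box x ∧ x ≤ a} := by
            apply sSup_le_sSup
            rintro b ⟨⟨s, c, hs, hc, rfl⟩, hle⟩
            refine ⟨MTBS.inf _ _ (MTBS.sat _ hs) ?_, hle⟩
            have : MTBS box cᶜᶜ :=
              MTBS.compl _ (MTBS.sat _ ⟨{cᶜ}, by simpa [MTClosed] using hc, (sInf_singleton).symm⟩)
            simpa using this
      · exact sSup_le fun x hx => hx.2
    conv_lhs => rw [key]
    exact hsSup _
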